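/- arXiv:1806.05702 — 2 statements merged into one kernel-verified Lean document; each statement's English description precedes it below -/
import Mathlib

section
/- For 0 < H < 1, the maximum of the Takagi–Landsberg function x^H over [0,1] equals 1/(3(1 − 2^{−H})). -/
open Filter Finset Set MeasureTheory ProbabilityTheory

noncomputable def e00 (t : ℝ) : ℝ := max (min t (1 - t)) 0

noncomputable def fs (m : ℕ) (k : ℤ) (t : ℝ) : ℝ :=
  (2 : ℝ) ^ (-(m : ℝ) / 2) * e00 ((2 : ℝ) ^ m * t - (k : ℝ))

def IsSign (θ : ℕ → ℕ → ℝ) : Prop := ∀ m k, θ m k = 1 ∨ θ m k = -1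

noncomputable def tlTerm (H : ℝ) (θ : ℕ → ℕ → ℝ) (m : ℕ) (t : ℝ) : ℝ :=
  (2 : ℝ) ^ ((m : ℝ) * (1 / 2 - H)) *
    ∑ k ∈ Finset.range (2 ^ m), θ m k * fs m (k : ℤ) t

noncomputable def sPartial (H : ℝ) (θ : ℕ → ℕ → ℝ) (n : ℕ) (t : ℝ) : ℝ :=
  ∑ m ∈ Finset.range n, tlTerm H θ m t

def MemX (H : ℝ) (x : ℝ → ℝ) : Prop :=
  ∃ θ : ℕ → ℕ → ℝ, IsSign θ ∧ ∀ t : ℝ, x t = ∑' m : ℕ, tlTerm H θ m t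

noncomputable def xTL (H : ℝ) (t : ℝ) : ℝ := ∑' m : ℕ, tlTerm H (fun _ _ => 1) m t

noncomputable def dyadicSum (p : ℝ) (x : ℝ → ℝ) (n : ℕ) (t : ℝ) : ℝ :=
  ∑ k ∈ Finset.range (2 ^ n),
    if (k : ℝ) / 2 ^ n ≤ t then |x (((k : ℝ) + 1) / 2 ^ n) - x ((k : ℝ) / 2 ^ n)| ^ p else 0

noncomputable def nuFloor (h : ℝ) : ℤ := ⌊-(Real.logb 2 h)⌋

noncomputable def omegaH (H h : ℝ) : ℝ :=
  h * (2 : ℝ) ^ (((nuFloor h : ℝ) - 1) * (1 - H)) / ((2 : ℝ) ^ (1 - H) - 1) +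
    (2 : ℝ) ^ ((1 - (nuFloor h : ℝ)) * H) / (3 * (1 - (2 : ℝ) ^ (-H)))

noncomputable def DD (u : ℝ) : ℝ := min (Int.fract u) (1 - Int.fract u)

lemma DD_nonneg (u : ℝ) : 0 ≤ DD u :=
  le_min (Int.fract_nonneg u) (by linarith [Int.fract_lt_one u])

lemma DD_le_half (u : ℝ) : DD u ≤ 1/2 := by
  rcases le_total (Int.fract u) (1/2) with h | h
  · exact le_trans (min_le_left _ _) h
  · exact le_trans (min_le_right _ _) (by linarith)

lemma e00_nonpos_arg {t : ℝ} (h : t ≤ 0) : e00 t = 0 := by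
  unfold e00
  exact max_eq_right (le_trans (min_le_left _ _) h)

lemma e00_ge_one_arg {t : ℝ} (h : 1 ≤ t) : e00 t = 0 := by
  unfold e00
  exact max_eq_right (le_trans (min_le_right _ _) (by linarith))

lemma sum_e00 (u : ℝ) (N : ℕ) (h0 : 0 ≤ u) (hN : u ≤ N) :
    ∑ k ∈ Finset.range N, e00 (u - (k : ℝ)) = DD u := by
  have hfl0 : (0:ℤ) ≤ ⌊u⌋ := Int.floor_nonneg.mpr h0
  by_cases hlt : ⌊u⌋ < (N : ℤ)
  · have ha : ((⌊u⌋.toNat : ℕ) : ℝ) = (⌊u⌋ : ℝ) := by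
      exact_mod_cast congrArg (Int.cast : ℤ → ℝ) (Int.toNat_of_nonneg hfl0)
    rw [Finset.sum_eq_single ⌊u⌋.toNat]
    · have hu : u - (⌊u⌋.toNat : ℝ) = Int.fract u := by
        rw [ha, Int.fract]
      rw [hu]
      unfold e00 DD
      have h1 := Int.fract_nonneg u
      have h2 := Int.fract_lt_one u
      exact max_eq_left (le_min h1 (by linarith))
    · intro b hb hne
      have hbZ : (b : ℤ) ≠ ⌊u⌋ := by omega
      rcases lt_or_gt_of_ne hbZ with h | h
      · have : (b : ℝ) ≤ (⌊u⌋ : ℝ) - 1 := by exact_mod_cast Int.le_sub_one_of_lt h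
        have hfl := Int.floor_le u
        exact e00_ge_one_arg (by linarith)
      · have : (⌊u⌋ : ℝ) + 1 ≤ (b : ℝ) := by exact_mod_cast Int.add_one_le_of_lt h
        have hfl := Int.lt_floor_add_one u
        exact e00_nonpos_arg (by linarith)
    · intro h
      exact absurd (Finset.mem_range.mpr (by omega)) h
  · have hNu : (N : ℝ) ≤ u := by
      have : (N : ℤ) ≤ ⌊u⌋ := not_lt.mp hlt
      exact_mod_cast le_trans (by exact_mod_cast this) (Int.floor_le u)
    have hu : u = (N : ℝ) := le_antisymm hN hNu
    subst hu
    rw [Finset.sum_eq_zero]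
    · unfold DD
      rw [Int.fract_natCast]
      simp
    · intro k hk
      have hk' : (k : ℝ) ≤ (N : ℝ) - 1 := by
        have := Finset.mem_range.mp hk
        have : (k : ℝ) + 1 ≤ (N : ℝ) := by exact_mod_cast this
        linarith
      exact e00_ge_one_arg (by linarith)

lemma DD_two (u : ℝ) : DD (2 * u) = min (2 * DD u) (1 - 2 * DD u) := by
  have h1 : Int.fract (2 * u) = Int.fract (2 * Int.fract u) := by
    rw [show (2:ℝ) * u = 2 * Int.fract u + ((2 * ⌊u⌋ : ℤ) : ℝ) by
      rw [Int.fract]; push_cast; ring, Int.fract_add_intCast]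
  have hf0 : 0 ≤ Int.fract u := Int.fract_nonneg u
  have hf1 : Int.fract u < 1 := Int.fract_lt_one u
  rcases lt_or_ge (Int.fract u) (1/2) with h | h
  · have h2 : Int.fract (2 * Int.fract u) = 2 * Int.fract u :=
      Int.fract_eq_self.mpr ⟨by linarith, by linarith⟩
    unfold DD
    rw [h1, h2, min_eq_left (show Int.fract u ≤ 1 - Int.fract u by linarith)]
  · have h2 : Int.fract (2 * Int.fract u) = 2 * Int.fract u - 1 := by
      have h3 := Int.fract_sub_intCast (2 * Int.fract u) 1
      rw [show (2 * Int.fract u - ((1:ℤ):ℝ)) = 2 * Int.fract u - 1 by push_cast; ring] at h3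
      calc Int.fract (2 * Int.fract u) = Int.fract (2 * Int.fract u - 1) := h3.symm
        _ = 2 * Int.fract u - 1 := Int.fract_eq_self.mpr ⟨by linarith, by linarith⟩
    unfold DD
    rw [h1, h2, min_eq_right (by linarith : 1 - Int.fract u ≤ Int.fract u), min_comm]
    congr 1 <;> ring

lemma keyIneq (u c : ℝ) (hc : 1/2 ≤ c) :
    DD u - 1/3 ≤ c * max (1/3 - DD (2*u)) 0 - max (1/3 - DD u) 0 := by
  have h2 := DD_two u
  have h0 := DD_nonneg u
  have hh := DD_le_half u
  rcases le_or_gt (DD u) (1/3) with h | h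
  · have hx : max (1/3 - DD u) 0 = 1/3 - DD u := max_eq_left (by linarith)
    have hpos : 0 ≤ c * max (1/3 - DD (2*u)) 0 :=
      mul_nonneg (by linarith) (le_max_right _ _)
    linarith
  · have hx : max (1/3 - DD u) 0 = 0 := max_eq_right (by linarith)
    have hD2 : DD (2*u) = 1 - 2 * DD u := by
      rw [h2, min_eq_right (by linarith)]
    have hm : max (1/3 - DD (2*u)) 0 = 2 * DD u - 2/3 := by
      rw [hD2, max_eq_left (by linarith)]; ring
    rw [hx, hm]
    nlinarith [mul_nonneg (by linarith : (0:ℝ) ≤ c - 1/2) (by linarith : (0:ℝ) ≤ DD u - 1/3)]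

lemma DD_pow_third (m : ℕ) : DD ((2:ℝ)^m * (1/3)) = 1/3 := by
  induction m with
  | zero =>
      unfold DD
      rw [pow_zero, one_mul, Int.fract_eq_self.mpr ⟨by norm_num, by norm_num⟩]
      norm_num
  | succ n ih =>
      rw [show (2:ℝ)^(n+1) * (1/3) = 2 * ((2:ℝ)^n * (1/3)) by ring, DD_two, ih]
      norm_num

lemma tlTerm_eq (H : ℝ) (t : ℝ) (ht : t ∈ Set.Icc (0:ℝ) 1) (m : ℕ) :
    tlTerm H (fun _ _ => 1) m t = ((2:ℝ)^(-H))^m * DD ((2:ℝ)^m * t) := by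
  have hsum : ∑ k ∈ Finset.range (2 ^ m), e00 ((2:ℝ)^m * t - ((k:ℤ) : ℝ)) =
      DD ((2:ℝ)^m * t) := by
    have h0 : (0:ℝ) ≤ (2:ℝ)^m * t := mul_nonneg (by positivity) ht.1
    have hN : (2:ℝ)^m * t ≤ ((2^m : ℕ) : ℝ) := by
      push_cast
      nlinarith [ht.2, (by positivity : (0:ℝ) < (2:ℝ)^m)]
    have := sum_e00 ((2:ℝ)^m * t) (2^m) h0 hN
    simpa using this
  unfold tlTerm fs
  simp only [one_mul]
  rw [← Finset.mul_sum, hsum, ← mul_assoc]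
  congr 1
  rw [← Real.rpow_natCast ((2:ℝ)^(-H)) m, ← Real.rpow_mul (by norm_num),
    ← Real.rpow_add (by norm_num : (0:ℝ) < 2)]
  congr 1
  ring

theorem stmt2 (H : ℝ) (hH : H ∈ Set.Ioo (0:ℝ) 1) :
    IsGreatest (xTL H '' Set.Icc 0 1) (1 / (3 * (1 - (2:ℝ) ^ (-H)))) := by
  obtain ⟨hH0, hH1⟩ := hH
  set a := (2:ℝ)^(-H) with ha
  have ha0 : 0 < a := Real.rpow_pos_of_pos two_pos _
  have ha1 : a < 1 := Real.rpow_lt_one_of_one_lt_of_neg one_lt_two (by linarith)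
  have hah : 1/2 ≤ a := by
    have h := Real.rpow_le_rpow_of_exponent_le (by norm_num : (1:ℝ) ≤ 2)
      (by linarith : (-1:ℝ) ≤ -H)
    rw [Real.rpow_neg_one] at h
    rw [ha]; linarith [h]
  have hb : 0 < 1 - a := by linarith
  have hxTL : ∀ t ∈ Set.Icc (0:ℝ) 1, xTL H t = ∑' m : ℕ, a^m * DD ((2:ℝ)^m * t) := by
    intro t ht
    exact tsum_congr fun m => tlTerm_eq H t ht m
  have hsummable : ∀ t : ℝ, Summable (fun m : ℕ => a^m * DD ((2:ℝ)^m * t)) := by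
    intro t
    apply Summable.of_nonneg_of_le
      (fun m => mul_nonneg (pow_nonneg ha0.le m) (DD_nonneg _))
      (fun m => ?_) (summable_geometric_of_lt_one ha0.le ha1)
    calc a^m * DD ((2:ℝ)^m * t) ≤ a^m * 1 :=
          mul_le_mul_of_nonneg_left ((DD_le_half _).trans (by norm_num)) (pow_nonneg ha0.le m)
      _ = a^m := mul_one _
  constructor
  · refine ⟨1/3, by norm_num, ?_⟩
    rw [hxTL (1/3) (by norm_num)]
    have : ∀ m : ℕ, a^m * DD ((2:ℝ)^m * (1/3)) = a^m * (1/3) := fun m => by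
      rw [DD_pow_third]
    rw [tsum_congr this, tsum_mul_right, tsum_geometric_of_lt_one ha0.le ha1]
    field_simp
  · rintro v ⟨t, ht, rfl⟩
    rw [hxTL t ht]
    apply Summable.tsum_le_of_sum_range_le (hsummable t)
    intro n
    set x : ℕ → ℝ := fun m => DD ((2:ℝ)^m * t) with hx
    set G : ℕ → ℝ := fun m => max (1/3 - x m) 0 with hG
    have hstep : ∀ m : ℕ, a^m * x m ≤ a^m * (1/3) + (a^(m+1) * G (m+1) - a^m * G m) := by
      intro m
      have hk := keyIneq ((2:ℝ)^m * t) a hah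
      rw [show 2 * ((2:ℝ)^m * t) = (2:ℝ)^(m+1) * t by ring] at hk
      have hk' : x m ≤ 1/3 + (a * G (m+1) - G m) := by
        simp only [hx, hG]
        linarith [hk]
      have := mul_le_mul_of_nonneg_left hk' (pow_nonneg ha0.le m)
      calc a^m * x m ≤ a^m * (1/3 + (a * G (m+1) - G m)) := this
        _ = a^m * (1/3) + (a^(m+1) * G (m+1) - a^m * G m) := by ring
    calc ∑ m ∈ Finset.range n, a^m * x m
        ≤ ∑ m ∈ Finset.range n, (a^m * (1/3) + (a^(m+1) * G (m+1) - a^m * G m)) :=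
          Finset.sum_le_sum fun m _ => hstep m
      _ = (∑ m ∈ Finset.range n, a^m) * (1/3) +
          (a^n * G n - a^0 * G 0) := by
          rw [Finset.sum_add_distrib, ← Finset.sum_mul,
            Finset.sum_range_sub (fun m => a^m * G m)]
      _ ≤ 1 / (3 * (1 - a)) := by
          have hgeom : (∑ m ∈ Finset.range n, a^m) * (1 - a) = 1 - a^n := by
            have h := geom_sum_mul a n
            nlinarith [h]
          have hGn : G n ≤ 1/3 := by
            simp only [hG]
            rcases le_total (1/3 - x n) 0 with h | h
            · rw [max_eq_right h]; norm_num
            · rw [max_eq_left h]; linarith [DD_nonneg ((2:ℝ)^n * t)]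
          have hG0 : 0 ≤ G 0 := le_max_right _ _
          have hpn : 0 ≤ a^n := pow_nonneg ha0.le n
          rw [le_div_iff₀ (by positivity : (0:ℝ) < 3 * (1 - a))]
          have h1 : (3*(1-a)) * (a^n * G n) ≤ (3*(1-a)) * (a^n * (1/3)) :=
            mul_le_mul_of_nonneg_left (mul_le_mul_of_nonneg_left hGn hpn)
              (by positivity)
          have h2 : 0 ≤ (3*(1-a)) * G 0 := mul_nonneg (by positivity) hG0
          nlinarith [hgeom, h1, h2, mul_nonneg ha0.le hpn]
end

section
/- For 0 < H < 1, the uniform maximum over the class 𝔛^H of signed Takagi–Landsberg functions is attained by x^H: sup over x ∈ 𝔛^H of the maximum of x on [0,1] equals 1/(3(1 − 2^{−H})). -/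
open Filter Finset Set MeasureTheory ProbabilityTheory

/- ### Auxiliary material -/

section Aux

noncomputable def Dd (x : ℝ) : ℝ := min (Int.fract x) (1 - Int.fract x)

lemma Dd_nonneg (x : ℝ) : 0 ≤ Dd x :=
  le_min (Int.fract_nonneg x) (by linarith [Int.fract_lt_one x])

lemma Dd_le_half (x : ℝ) : Dd x ≤ 1/2 := by
  rcases le_total (Int.fract x) (1/2) with h | h
  · exact (min_le_left _ _).trans h
  · exact (min_le_right _ _).trans (by linarith)

lemma fract_two_mul (x : ℝ) :
    Int.fract (2*x) = if Int.fract x < 1/2 then 2 * Int.fract x else 2 * Int.fract x - 1 := by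
  have hx : 2*x = (2*⌊x⌋ : ℤ) + 2 * Int.fract x := by
    push_cast; rw [Int.fract]; ring
  rw [hx, Int.fract_intCast_add]
  have h0 := Int.fract_nonneg x
  have h1 := Int.fract_lt_one x
  split_ifs with h
  · exact Int.fract_eq_self.mpr ⟨by linarith, by linarith⟩
  · have key : Int.fract (2 * Int.fract x) = Int.fract (2 * Int.fract x - (1:ℤ)) := by
      rw [Int.fract_sub_intCast]
    rw [key]
    push_cast
    exact Int.fract_eq_self.mpr ⟨by linarith, by linarith⟩

lemma Dd_double (x : ℝ) : Dd (2*x) = min (2 * Dd x) (1 - 2 * Dd x) := by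
  have h0 := Int.fract_nonneg x
  have h1 := Int.fract_lt_one x
  unfold Dd
  rw [fract_two_mul]
  split_ifs with h <;> simp only [min_def] <;> split_ifs <;> linarith

lemma e00_eq (x : ℝ) (k : ℕ) :
    e00 (x - (k:ℝ)) = if ⌊x⌋ = (k:ℤ) then Dd x else 0 := by
  have h0 := Int.fract_nonneg x
  have h1 := Int.fract_lt_one x
  have hfl := Int.floor_le x
  have hfu := Int.lt_floor_add_one x
  split_ifs with h
  · have hx : x - (k:ℝ) = Int.fract x := by
      rw [Int.fract, h]; push_cast; ring
    rw [hx]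
    unfold e00 Dd
    rw [max_eq_left]
    exact le_min h0 (by linarith)
  · unfold e00
    rcases lt_or_gt_of_ne h with hlt | hgt
    · have : (⌊x⌋:ℝ) + 1 ≤ (k:ℝ) := by exact_mod_cast Int.add_one_le_iff.mpr hlt
      have : x - (k:ℝ) < 0 := by linarith
      rw [max_eq_right]
      exact (min_le_left _ _).trans (by linarith)
    · have : (k:ℝ) + 1 ≤ (⌊x⌋:ℝ) := by exact_mod_cast Int.add_one_le_iff.mpr hgt
      have : 1 - (x - (k:ℝ)) ≤ 0 := by linarith
      rw [max_eq_right]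
      exact (min_le_right _ _).trans (by linarith)

lemma sum_e00_s5 (x : ℝ) (n : ℕ) (hx : 0 ≤ x) (hxn : x ≤ n) :
    ∑ k ∈ Finset.range n, e00 (x - (k:ℝ)) = Dd x := by
  have hj : ((⌊x⌋.toNat : ℤ)) = ⌊x⌋ := Int.toNat_of_nonneg (Int.floor_nonneg.mpr hx)
  have hcongr : ∀ k ∈ Finset.range n, e00 (x - (k:ℝ)) = if ⌊x⌋.toNat = k then Dd x else 0 := by
    intro k _
    rw [e00_eq]
    congr 1
    simp only [eq_iff_iff]
    constructor
    · intro h; omega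
    · intro h; omega
  rw [Finset.sum_congr rfl hcongr, Finset.sum_ite_eq]
  split_ifs with h
  · rfl
  · simp only [Finset.mem_range, not_lt] at h
    have hge : (n:ℤ) ≤ ⌊x⌋ := by omega
    have hfl : (⌊x⌋:ℝ) ≤ x := Int.floor_le x
    have hxn' : x = (n:ℝ) := by
      have : ((n:ℤ):ℝ) ≤ x := le_trans (by exact_mod_cast Int.cast_le.mpr hge) hfl
      push_cast at this; linarith
    have hz : Int.fract x = 0 := by rw [hxn']; exact_mod_cast Int.fract_natCast n
    unfold Dd
    rw [hz]; norm_num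

noncomputable def qq (a : ℝ) : ℕ → ℝ
  | 0 => 1
  | k+1 => 1 + 2*a*(qq a k)

noncomputable def Mv (a : ℝ) : ℝ := 1/(3*(1-a))

noncomputable def ll (a : ℝ) (k : ℕ) (d : ℝ) : ℝ := qq a k * d + a^(k+1) * Mv a

noncomputable def WW (a : ℝ) (d : ℝ) : ℝ :=
  ⨅ k : ℕ, min (ll a k d) (d + a * ll a k (1-2*d))

section
variable {a : ℝ} (ha1 : 1/2 < a) (ha2 : a < 1)

include ha1 in
lemma qq_pos : ∀ k, 0 < qq a k := by
  intro k; induction k with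
  | zero => norm_num [qq]
  | succ n ih => simp only [qq]; nlinarith

include ha2 in
lemma Mv_pos (ha0 : 0 < a) : 0 < Mv a := by
  have h : (0:ℝ) < 1 - a := by linarith
  unfold Mv; positivity

include ha1 ha2 in
lemma ll_nonneg {k : ℕ} {d : ℝ} (hd : 0 ≤ d) : 0 ≤ ll a k d := by
  have := qq_pos ha1 k
  have := Mv_pos ha2 (by linarith : (0:ℝ) < a)
  have : (0:ℝ) < a := by linarith
  unfold ll; positivity

include ha1 ha2 in
lemma WW_bddBelow {d : ℝ} (hd : d ∈ Set.Icc (0:ℝ) (1/2)) :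
    BddBelow (Set.range fun k => min (ll a k d) (d + a * ll a k (1-2*d))) := by
  refine ⟨0, ?_⟩
  rintro y ⟨k, rfl⟩
  refine le_min (ll_nonneg ha1 ha2 hd.1) ?_
  have h2 : 0 ≤ ll a k (1-2*d) := ll_nonneg ha1 ha2 (by linarith [hd.2])
  nlinarith [hd.1]

include ha1 ha2 in
lemma WW_nonneg {d : ℝ} (hd : d ∈ Set.Icc (0:ℝ) (1/2)) : 0 ≤ WW a d := by
  refine le_ciInf fun k => ?_
  refine le_min (ll_nonneg ha1 ha2 hd.1) ?_
  have h2 : 0 ≤ ll a k (1-2*d) := ll_nonneg ha1 ha2 (by linarith [hd.2])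
  nlinarith [hd.1]

include ha2 in
omit ha1 in
lemma Mv_eq : 1/3 + a * Mv a = Mv a := by
  have : (1:ℝ) - a ≠ 0 := by linarith
  unfold Mv
  field_simp
  ring

include ha1 ha2 in
lemma WW_le_Mv {d : ℝ} (hd : d ∈ Set.Icc (0:ℝ) (1/2)) : WW a d ≤ Mv a := by
  have hM := Mv_eq ha2
  rcases le_total d (1/3) with h | h
  · calc WW a d ≤ min (ll a 0 d) (d + a * ll a 0 (1-2*d)) := ciInf_le (WW_bddBelow ha1 ha2 hd) 0
    _ ≤ ll a 0 d := min_le_left _ _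
    _ = d + a * Mv a := by simp only [ll, qq, pow_one, pow_zero]; ring
    _ ≤ 1/3 + a * Mv a := by linarith
    _ = Mv a := hM
  · calc WW a d ≤ min (ll a 0 d) (d + a * ll a 0 (1-2*d)) := ciInf_le (WW_bddBelow ha1 ha2 hd) 0
    _ ≤ d + a * ll a 0 (1-2*d) := min_le_right _ _
    _ = d + a * ((1-2*d) + a * Mv a) := by simp only [ll, qq, pow_one, pow_zero]; ring
    _ ≤ Mv a := by nlinarith

include ha1 ha2 in
lemma WW_super {d : ℝ} (hd : d ∈ Set.Icc (0:ℝ) (1/2)) :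
    d + a * WW a (min (2*d) (1-2*d)) ≤ WW a d := by
  obtain ⟨hd0, hd2⟩ := hd
  set s := min (2*d) (1-2*d) with hs
  have hs0 : 0 ≤ s := by
    rcases le_total (2*d) (1-2*d) with h | h
    · rw [hs, min_eq_left h]; linarith
    · rw [hs, min_eq_right h]; linarith
  have hs2 : s ≤ 1/2 := by
    rcases le_total (2*d) (1-2*d) with h | h
    · rw [hs, min_eq_left h]; linarith
    · rw [hs, min_eq_right h]; linarith
  have hsIcc : s ∈ Set.Icc (0:ℝ) (1/2) := ⟨hs0, hs2⟩
  have ha0 : (0:ℝ) < a := by linarith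
  have hWs : ∀ k, WW a s ≤ ll a k s := fun k =>
    le_trans (ciInf_le (WW_bddBelow ha1 ha2 hsIcc) k) (min_le_left _ _)
  have llmono : ∀ k, ∀ x y : ℝ, x ≤ y → ll a k x ≤ ll a k y := by
    intro k x y hxy
    have := qq_pos ha1 k
    unfold ll; nlinarith
  refine le_ciInf fun k => le_min ?_ ?_
  · cases k with
    | zero =>
      have hl0 : ll a 0 d = d + a * Mv a := by simp only [ll, qq, pow_one, pow_zero]; ring
      rw [hl0]
      nlinarith [WW_le_Mv ha1 ha2 hsIcc]
    | succ j =>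
      have hrec : ll a (j+1) d = d + a * ll a j (2*d) := by
        simp only [ll, qq]; ring
      rw [hrec]
      have h1 : WW a s ≤ ll a j (2*d) :=
        le_trans (hWs j) (llmono j _ _ (min_le_left _ _))
      nlinarith
  · have h1 : WW a s ≤ ll a k (1-2*d) :=
      le_trans (hWs k) (llmono k _ _ (min_le_right _ _))
    nlinarith

include ha1 ha2 in
lemma sum_bound : ∀ n : ℕ, ∀ u : ℕ → ℝ, u 0 ∈ Set.Icc (0:ℝ) (1/2) →
    (∀ m, u (m+1) = min (2 * u m) (1 - 2 * u m)) →
    ∑ m ∈ Finset.range n, a^m * u m ≤ WW a (u 0) := by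
  intro n
  induction n with
  | zero => intro u hu _; simpa using WW_nonneg ha1 ha2 hu
  | succ n ih =>
    intro u hu hrec
    have ha0 : (0:ℝ) < a := by linarith
    have hu1 : u 1 ∈ Set.Icc (0:ℝ) (1/2) := by
      rw [hrec 0]
      constructor
      · rcases le_total (2*u 0) (1-2*u 0) with h | h
        · rw [min_eq_left h]; linarith [hu.1]
        · rw [min_eq_right h]; linarith [hu.2]
      · rcases le_total (2*u 0) (1-2*u 0) with h | h
        · rw [min_eq_left h]; linarith
        · rw [min_eq_right h]; linarith [hu.1]
    have step := ih (fun m => u (m+1)) hu1 (fun m => hrec (m+1))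
    have hsum : ∑ m ∈ Finset.range (n+1), a^m * u m
        = u 0 + a * ∑ m ∈ Finset.range n, a^m * u (m+1) := by
      rw [Finset.sum_range_succ', pow_zero, one_mul, add_comm]
      congr 1
      rw [Finset.mul_sum]
      exact Finset.sum_congr rfl (fun i _ => by ring)
    rw [hsum]
    have hsup := WW_super ha1 ha2 hu
    rw [← hrec 0] at hsup
    nlinarith

include ha1 ha2 in
lemma tsum_bound {u : ℕ → ℝ} (hu : u 0 ∈ Set.Icc (0:ℝ) (1/2))
    (hrec : ∀ m, u (m+1) = min (2 * u m) (1 - 2 * u m)) :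
    ∑' m, a^m * u m ≤ Mv a := by
  have ha0 : (0:ℝ) < a := by linarith
  have huIcc : ∀ m, u m ∈ Set.Icc (0:ℝ) (1/2) := by
    intro m; induction m with
    | zero => exact hu
    | succ n ihn =>
      rw [hrec n]
      constructor
      · rcases le_total (2*u n) (1-2*u n) with h | h
        · rw [min_eq_left h]; linarith [ihn.1]
        · rw [min_eq_right h]; linarith [ihn.2]
      · rcases le_total (2*u n) (1-2*u n) with h | h
        · rw [min_eq_left h]; linarith
        · rw [min_eq_right h]; linarith [ihn.1]
  have hsummable : Summable (fun m => a^m * u m) := by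
    refine Summable.of_nonneg_of_le (fun m => ?_) (fun m => ?_)
      ((summable_geometric_of_lt_one ha0.le ha2).mul_right (1/2))
    · exact mul_nonneg (pow_nonneg ha0.le m) (huIcc m).1
    · exact mul_le_mul_of_nonneg_left (huIcc m).2 (pow_nonneg ha0.le m)
  exact Summable.tsum_le_of_sum_range_le hsummable (fun n => le_trans (sum_bound ha1 ha2 n u hu hrec)
    (WW_le_Mv ha1 ha2 hu))

end

/- connection lemmas -/

lemma coeff_eq (H : ℝ) (m : ℕ) :
    (2:ℝ)^((m:ℝ)*(1/2 - H)) * (2:ℝ)^(-(m:ℝ)/2) = ((2:ℝ)^(-H))^m := by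
  rw [← Real.rpow_natCast ((2:ℝ)^(-H)) m, ← Real.rpow_mul (by norm_num : (0:ℝ) ≤ 2),
    ← Real.rpow_add (by norm_num : (0:ℝ) < 2)]
  ring_nf

lemma fs_sum (m : ℕ) (t : ℝ) (ht : t ∈ Set.Icc (0:ℝ) 1) :
    ∑ k ∈ Finset.range (2^m), fs m (k:ℤ) t
      = (2:ℝ)^(-(m:ℝ)/2) * Dd ((2:ℝ)^m * t) := by
  unfold fs
  rw [← Finset.mul_sum]
  congr 1
  have hcast : ∀ k : ℕ, (((k:ℤ):ℝ)) = (k:ℝ) := fun k => by push_cast; ring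
  have h1 : ∑ k ∈ Finset.range (2^m), e00 ((2:ℝ)^m * t - ((k:ℤ):ℝ))
      = ∑ k ∈ Finset.range (2^m), e00 ((2:ℝ)^m * t - (k:ℝ)) := by
    exact Finset.sum_congr rfl (fun k _ => by rw [hcast])
  rw [h1, sum_e00_s5]
  · exact mul_nonneg (by positivity) ht.1
  · push_cast
    nlinarith [ht.2, pow_pos (by norm_num : (0:ℝ) < 2) m]

lemma fs_nonneg (m : ℕ) (k : ℤ) (t : ℝ) : 0 ≤ fs m k t := by
  unfold fs e00
  positivity

lemma tlTerm_le {H : ℝ} {θ : ℕ → ℕ → ℝ} (hθ : IsSign θ) (m : ℕ) {t : ℝ}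
    (ht : t ∈ Set.Icc (0:ℝ) 1) :
    tlTerm H θ m t ≤ ((2:ℝ)^(-H))^m * Dd ((2:ℝ)^m * t) := by
  unfold tlTerm
  have hsum : ∑ k ∈ Finset.range (2^m), θ m k * fs m (k:ℤ) t
      ≤ ∑ k ∈ Finset.range (2^m), fs m (k:ℤ) t := by
    refine Finset.sum_le_sum (fun k _ => ?_)
    have h1 : θ m k ≤ 1 := by rcases hθ m k with h | h <;> rw [h] <;> norm_num
    nlinarith [fs_nonneg m (k:ℤ) t]
  have hc : (0:ℝ) < (2:ℝ)^((m:ℝ)*(1/2 - H)) := Real.rpow_pos_of_pos (by norm_num) _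
  calc (2:ℝ)^((m:ℝ)*(1/2 - H)) * ∑ k ∈ Finset.range (2^m), θ m k * fs m (k:ℤ) t
      ≤ (2:ℝ)^((m:ℝ)*(1/2 - H)) * ∑ k ∈ Finset.range (2^m), fs m (k:ℤ) t :=
        mul_le_mul_of_nonneg_left hsum hc.le
    _ = ((2:ℝ)^(-H))^m * Dd ((2:ℝ)^m * t) := by
        rw [fs_sum m t ht, ← mul_assoc, coeff_eq]

lemma tlTerm_ge {H : ℝ} {θ : ℕ → ℕ → ℝ} (hθ : IsSign θ) (m : ℕ) {t : ℝ}
    (ht : t ∈ Set.Icc (0:ℝ) 1) :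
    -(((2:ℝ)^(-H))^m * Dd ((2:ℝ)^m * t)) ≤ tlTerm H θ m t := by
  unfold tlTerm
  have hsum : -∑ k ∈ Finset.range (2^m), fs m (k:ℤ) t
      ≤ ∑ k ∈ Finset.range (2^m), θ m k * fs m (k:ℤ) t := by
    rw [← Finset.sum_neg_distrib]
    refine Finset.sum_le_sum (fun k _ => ?_)
    have h1 : -1 ≤ θ m k := by rcases hθ m k with h | h <;> rw [h] <;> norm_num
    nlinarith [fs_nonneg m (k:ℤ) t]
  have hc : (0:ℝ) < (2:ℝ)^((m:ℝ)*(1/2 - H)) := Real.rpow_pos_of_pos (by norm_num) _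
  calc -(((2:ℝ)^(-H))^m * Dd ((2:ℝ)^m * t))
      = (2:ℝ)^((m:ℝ)*(1/2 - H)) * -∑ k ∈ Finset.range (2^m), fs m (k:ℤ) t := by
        rw [fs_sum m t ht, ← coeff_eq H m]; ring
    _ ≤ (2:ℝ)^((m:ℝ)*(1/2 - H)) * ∑ k ∈ Finset.range (2^m), θ m k * fs m (k:ℤ) t :=
        mul_le_mul_of_nonneg_left hsum hc.le

lemma tlTerm_one_eq (H : ℝ) (m : ℕ) {t : ℝ} (ht : t ∈ Set.Icc (0:ℝ) 1) :
    tlTerm H (fun _ _ => 1) m t = ((2:ℝ)^(-H))^m * Dd ((2:ℝ)^m * t) := by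
  unfold tlTerm
  simp only [one_mul]
  rw [fs_sum m t ht, ← mul_assoc, coeff_eq]

lemma Dd_third : ∀ m : ℕ, Dd ((2:ℝ)^m * (1/3)) = 1/3 := by
  intro m
  induction m with
  | zero =>
    norm_num
    unfold Dd
    rw [Int.fract_eq_self.mpr (by norm_num)]
    norm_num
  | succ n ih =>
    have h : (2:ℝ)^(n+1) * (1/3) = 2 * ((2:ℝ)^n * (1/3)) := by ring
    rw [h, Dd_double, ih]
    norm_num

end Aux

theorem stmt5 (H : ℝ) (hH : H ∈ Set.Ioo (0:ℝ) 1) :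
    MemX H (xTL H) ∧
    IsGreatest {y : ℝ | ∃ x t, MemX H x ∧ t ∈ Set.Icc (0:ℝ) 1 ∧ y = x t}
      (1 / (3 * (1 - (2:ℝ) ^ (-H)))) := by
  obtain ⟨hH0, hH1⟩ := hH
  set a : ℝ := (2:ℝ)^(-H) with ha_def
  have ha0 : (0:ℝ) < a := Real.rpow_pos_of_pos (by norm_num) _
  have ha2 : a < 1 := Real.rpow_lt_one_of_one_lt_of_neg (by norm_num) (by linarith)
  have ha1 : 1/2 < a := by
    have : (2:ℝ)^(-1:ℝ) < (2:ℝ)^(-H) := by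
      apply Real.rpow_lt_rpow_left_iff (by norm_num : (1:ℝ) < 2) |>.mpr
      linarith
    rw [Real.rpow_neg_one] at this
    norm_num at this
    linarith
  have hmem : MemX H (xTL H) := ⟨fun _ _ => 1, fun m k => Or.inl rfl, fun t => rfl⟩
  refine ⟨hmem, ?_, ?_⟩
  · -- membership: attained at t = 1/3 by xTL
    refine ⟨xTL H, 1/3, hmem, ⟨by norm_num, by norm_num⟩, ?_⟩
    have h13 : (1/3 : ℝ) ∈ Set.Icc (0:ℝ) 1 := ⟨by norm_num, by norm_num⟩
    have hterm : ∀ m : ℕ, tlTerm H (fun _ _ => 1) m (1/3) = a^m * (1/3) := by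
      intro m
      rw [tlTerm_one_eq H m h13, Dd_third m]
    unfold xTL
    rw [tsum_congr hterm]
    rw [tsum_mul_right, tsum_geometric_of_lt_one ha0.le ha2]
    have hne : (1:ℝ) - a ≠ 0 := by linarith
    field_simp
  · -- upper bound
    rintro y ⟨x, t, ⟨θ, hθ, hx⟩, ht, rfl⟩
    rw [hx t]
    have hDrec : ∀ m : ℕ, Dd ((2:ℝ)^(m+1) * t)
        = min (2 * Dd ((2:ℝ)^m * t)) (1 - 2 * Dd ((2:ℝ)^m * t)) := by
      intro m
      have h : (2:ℝ)^(m+1) * t = 2 * ((2:ℝ)^m * t) := by ring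
      rw [h, Dd_double]
    have hsum2 : Summable (fun m => a^m * Dd ((2:ℝ)^m * t)) := by
      refine Summable.of_nonneg_of_le (fun m => ?_) (fun m => ?_)
        ((summable_geometric_of_lt_one ha0.le ha2).mul_right (1/2))
      · exact mul_nonneg (pow_nonneg ha0.le m) (Dd_nonneg _)
      · exact mul_le_mul_of_nonneg_left (Dd_le_half _) (pow_nonneg ha0.le m)
    have hsum1 : Summable (fun m => tlTerm H θ m t) := by
      refine Summable.of_norm_bounded hsum2 (fun m => ?_)
      rw [Real.norm_eq_abs, abs_le]
      exact ⟨tlTerm_ge hθ m ht, tlTerm_le hθ m ht⟩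
    have h1 : ∑' m, tlTerm H θ m t ≤ ∑' m, a^m * Dd ((2:ℝ)^m * t) :=
      Summable.tsum_le_tsum (fun m => tlTerm_le hθ m ht) hsum1 hsum2
    have h2 : ∑' m, a^m * Dd ((2:ℝ)^m * t) ≤ Mv a := by
      refine tsum_bound ha1 ha2 ?_ ?_
      · constructor
        · simpa using Dd_nonneg t
        · simpa using Dd_le_half t
      · exact hDrec
    have : Mv a = 1 / (3 * (1 - a)) := rfl
    linarith [h1, h2]
end
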